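/- If π is greedy with respect to Q, then component-wise Q* − Q^π ≤ γPΠ^{π*}(Q* − Q^π) + (γPΠ^{π*} − γPΠ^π)(Q^π − Q), where Q* is the optimal action-value function and π* an optimal policy. -/

import Mathlib

open Finset

/-- If `π` is greedy w.r.t. `Q`, then component-wise
`Q* − Q^π ≤ γPΠ^{π*}(Q* − Q^π) + (γPΠ^{π*} − γPΠ^π)(Q^π − Q)`. -/
theorem greedy_componentwise_recursion
    {S A : Type*} [Fintype S] [Fintype A] [Nonempty A] [DecidableEq S] [DecidableEq A]
    (P : S → A → S → ℝ) (rew : S → A → ℝ) (γ : ℝ)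
    (π πstar : S → A → ℝ) (Q Qπ Qstar : S × A → ℝ)
    (hP0 : ∀ s a s', 0 ≤ P s a s') (hP1 : ∀ s a, ∑ s', P s a s' = 1)
    (hπ0 : ∀ s a, 0 ≤ π s a) (hπ1 : ∀ s, ∑ a, π s a = 1)
    (hπstar0 : ∀ s a, 0 ≤ πstar s a) (hπstar1 : ∀ s, ∑ a, πstar s a = 1)
    (hγ0 : 0 ≤ γ) (hγ1 : γ < 1)
    -- the state-action transition matrices PΠ^π and PΠ^{π*}
    (Mπ Mstar : Matrix (S × A) (S × A) ℝ)
    (hMπ : Mπ = fun p q => P p.1 p.2 q.1 * π q.1 q.2)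
    (hMstar : Mstar = fun p q => P p.1 p.2 q.1 * πstar q.1 q.2)
    -- π is greedy with respect to Q
    (hgreedy : ∀ s a, 0 < π s a →
      Q (s, a) = Finset.univ.sup' Finset.univ_nonempty fun a' => Q (s, a'))
    -- Q^π is the fixed point of 𝒯^π
    (hQπ : (fun p => rew p.1 p.2) + γ • Mπ.mulVec Qπ = Qπ)
    -- Q* is the fixed point of 𝒯^{π*} and of the Bellman optimality operator 𝒯
    (hQstar : (fun p => rew p.1 p.2) + γ • Mstar.mulVec Qstar = Qstar)
    (hQstarOpt : ∀ p : S × A,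
      Qstar p = rew p.1 p.2 + γ * ∑ s', P p.1 p.2 s' *
        (Finset.univ.sup' Finset.univ_nonempty fun a' => Qstar (s', a'))) :
    Qstar - Qπ ≤
      γ • Mstar.mulVec (Qstar - Qπ) +
        (γ • Mstar - γ • Mπ).mulVec (Qπ - Q) := by

  -- Key pointwise facts about greedy / star sums
  have hsumπ : ∀ s : S, ∑ a, π s a * Q (s, a)
      = Finset.univ.sup' Finset.univ_nonempty (fun a' => Q (s, a')) := by
    intro s
    set M := Finset.univ.sup' Finset.univ_nonempty (fun a' => Q (s, a')) with hM
    have : ∑ a, π s a * Q (s, a) = ∑ a, π s a * M := by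
      refine Finset.sum_congr rfl (fun a _ => ?_)
      rcases (hπ0 s a).lt_or_eq with h | h
      · rw [hgreedy s a h]
      · rw [← h]; ring
    rw [this, ← Finset.sum_mul, hπ1 s, one_mul]
  have hsumstar : ∀ s : S, ∑ a, πstar s a * Q (s, a)
      ≤ Finset.univ.sup' Finset.univ_nonempty (fun a' => Q (s, a')) := by
    intro s
    set M := Finset.univ.sup' Finset.univ_nonempty (fun a' => Q (s, a')) with hM
    calc ∑ a, πstar s a * Q (s, a) ≤ ∑ a, πstar s a * M := by
          refine Finset.sum_le_sum (fun a _ => ?_)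
          exact mul_le_mul_of_nonneg_left
            (Finset.le_sup' (fun a' => Q (s, a')) (Finset.mem_univ a)) (hπstar0 s a)
      _ = M := by rw [← Finset.sum_mul, hπstar1 s, one_mul]
  -- The difference matrix applied to Q is nonpositive
  have hDQ : (γ • Mstar - γ • Mπ).mulVec Q ≤ 0 := by
    intro p
    have : (γ • Mstar - γ • Mπ).mulVec Q p
        = γ * ∑ s', P p.1 p.2 s' *
            ((∑ a, πstar s' a * Q (s', a)) - (∑ a, π s' a * Q (s', a))) := by
      simp only [Matrix.mulVec, dotProduct, Matrix.sub_apply, Matrix.smul_apply,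
        hMπ, hMstar, Pi.smul_apply, smul_eq_mul, Fintype.sum_prod_type]
      rw [Finset.mul_sum]
      refine Finset.sum_congr rfl (fun s' _ => ?_)
      simp only [sub_mul, mul_sub, Finset.mul_sum, Finset.sum_sub_distrib]
      congr 1 <;> exact Finset.sum_congr rfl fun a _ => by
        change γ * (P p.1 p.2 s' * _) * Q (s', a) = _; ring
    rw [this]
    have h1 : ∀ s' : S, P p.1 p.2 s' *
        ((∑ a, πstar s' a * Q (s', a)) - (∑ a, π s' a * Q (s', a))) ≤ 0 := by
      intro s'
      apply mul_nonpos_of_nonneg_of_nonpos (hP0 _ _ _)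
      rw [sub_nonpos, hsumπ s']
      exact hsumstar s'
    have := Finset.sum_nonpos (fun s' (_ : s' ∈ Finset.univ) => h1 s')
    simpa using mul_nonpos_of_nonneg_of_nonpos hγ0 this
  -- The algebraic identity
  have hkey : Qstar - Qπ
      = γ • Mstar.mulVec (Qstar - Qπ) + (γ • Mstar - γ • Mπ).mulVec (Qπ - Q)
        + (γ • Mstar - γ • Mπ).mulVec Q := by
    have e1 : Qstar - Qπ = γ • Mstar.mulVec Qstar - γ • Mπ.mulVec Qπ := by
      conv_lhs => rw [← hQstar, ← hQπ]
      abel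
    conv_lhs => rw [e1]
    funext p
    simp only [Matrix.sub_mulVec, Matrix.mulVec_sub, Matrix.smul_mulVec,
      Pi.add_apply, Pi.sub_apply, Pi.smul_apply, smul_eq_mul]
    ring
  calc Qstar - Qπ
      = γ • Mstar.mulVec (Qstar - Qπ) + (γ • Mstar - γ • Mπ).mulVec (Qπ - Q)
        + (γ • Mstar - γ • Mπ).mulVec Q := hkey
    _ ≤ γ • Mstar.mulVec (Qstar - Qπ) + (γ • Mstar - γ • Mπ).mulVec (Qπ - Q) + 0 :=
        add_le_add_right hDQ _
    _ = _ := by rw [add_zero]
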